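/- Let G be a finite non-abelian p-group such that Aut_l(G) = Inn(G). Then G is nilpotent of class 2 and exp(G/Z(G)) ≤ exp(L(G)). -/

import Mathlib

/-- The absolute centre `L(G)`: elements fixed by every automorphism of `G`. -/
def absoluteCenter (G : Type*) [Group G] : Subgroup G where
  carrier := {g | ∀ α : MulAut G, α g = g}
  one_mem' := fun α => map_one α
  mul_mem' := fun {a b} ha hb α => by rw [map_mul, ha α, hb α]
  inv_mem' := fun {a} ha α => by rw [map_inv, ha α]

/-- The group `Aut_l(G)` of absolute central automorphisms of `G`. -/
def absCentralAut (G : Type*) [Group G] : Subgroup (MulAut G) where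
  carrier := {α | ∀ g : G, g⁻¹ * α g ∈ absoluteCenter G}
  one_mem' := fun g => by simpa using (absoluteCenter G).one_mem
  mul_mem' := fun {α β} hα hβ g => by
    have h : g⁻¹ * (α * β) g = (g⁻¹ * β g) * ((β g)⁻¹ * α (β g)) := by
      simp [MulAut.mul_apply, mul_assoc]
    rw [h]; exact mul_mem (hβ g) (hα (β g))
  inv_mem' := fun {α} hα g => by
    have h : g⁻¹ * α⁻¹ g = ((α⁻¹ g)⁻¹ * α (α⁻¹ g))⁻¹ := by
      simp [MulAut.inv_def, mul_assoc]
    rw [h]; exact inv_mem (hα (α⁻¹ g))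

/-- Let `G` be a finite non-abelian `p`-group with `Aut_l(G) = Inn(G)`.
Then `G` is nilpotent of class `2` and `exp(G/Z(G)) ≤ exp(L(G))`. -/
theorem class_two_and_exponent_le {p : ℕ} [Fact p.Prime] (G : Type*) [Group G] [Finite G]
    (hG : IsPGroup p G) (hna : ∃ a b : G, a * b ≠ b * a)
    (h : absCentralAut G = (MulAut.conj : G →* MulAut G).range) :
    (upperCentralSeries G 2 = ⊤ ∧ upperCentralSeries G 1 ≠ ⊤) ∧
      Monoid.exponent (G ⧸ Subgroup.center G) ≤ Monoid.exponent (absoluteCenter G) := by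
  -- Inner automorphisms are absolute central, so all commutators lie in L(G)
  have hL : ∀ x g : G, g⁻¹ * (x * g * x⁻¹) ∈ absoluteCenter G := by
    intro x g
    have hx : MulAut.conj x ∈ absCentralAut G := by
      rw [h]; exact ⟨x, rfl⟩
    simpa using hx g
  -- L(G) ⊆ Z(G)
  have hLZ : ∀ c ∈ absoluteCenter G, c ∈ Subgroup.center G := by
    intro c hc
    rw [Subgroup.mem_center_iff]
    intro x
    have hx : x * c * x⁻¹ = c := by simpa using hc (MulAut.conj x)
    calc x * c = (x * c * x⁻¹) * x := by group
      _ = c * x := by rw [hx]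
  have hcomm : ∀ g y : G, g⁻¹ * (y * g * y⁻¹) ∈ Subgroup.center G :=
    fun g y => hLZ _ (hL y g)
  have hexp : 0 < Monoid.exponent (absoluteCenter G) :=
    Monoid.exponent_pos.mpr (Monoid.ExponentExists.of_finite)
  set n := Monoid.exponent (absoluteCenter G) with hn
  have hgz : ∀ g : G, g ^ n ∈ Subgroup.center G := by
    intro g
    rw [Subgroup.mem_center_iff]
    intro y
    have hc := hL y g
    set c := g⁻¹ * (y * g * y⁻¹) with hcdef
    have hcz := hLZ _ hc
    have hcn : c ^ n = 1 := by
      have h1 : (⟨c, hc⟩ : absoluteCenter G) ^ n = 1 := Monoid.pow_exponent_eq_one _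
      have := congrArg (Subtype.val) h1
      simpa using this
    have hkey : y * g * y⁻¹ = g * c := by rw [hcdef]; group
    have hcg : Commute g c := Subgroup.mem_center_iff.mp hcz g
    have h2 : y * g ^ n * y⁻¹ = g ^ n := by
      calc y * g ^ n * y⁻¹ = (y * g * y⁻¹) ^ n := by rw [conj_pow]
        _ = (g * c) ^ n := by rw [hkey]
        _ = g ^ n * c ^ n := hcg.mul_pow n
        _ = g ^ n := by rw [hcn, mul_one]
    calc y * g ^ n = (y * g ^ n * y⁻¹) * y := by group
      _ = g ^ n * y := by rw [h2]
  refine ⟨⟨?_, ?_⟩, ?_⟩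
  · rw [Subgroup.eq_top_iff']
    intro x
    show x ∈ Subgroup.upperCentralSeries G (1 + 1)
    rw [mem_upperCentralSeries_succ_iff]
    intro y
    rw [upperCentralSeries_one]
    have := hcomm x⁻¹ y
    simpa [commutatorElement_def, mul_assoc] using this
  · show Subgroup.upperCentralSeries G 1 ≠ ⊤
    rw [upperCentralSeries_one]
    intro heq
    obtain ⟨a, b, hab⟩ := hna
    exact hab (Subgroup.mem_center_iff.mp (heq ▸ Subgroup.mem_top b) a)
  · refine Nat.le_of_dvd hexp (Monoid.exponent_dvd_of_forall_pow_eq_one ?_)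
    intro q
    obtain ⟨g, rfl⟩ := QuotientGroup.mk_surjective q
    rw [← QuotientGroup.mk_pow]
    exact (QuotientGroup.eq_one_iff _).mpr (hgz g)
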